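/- (Astuti–Wimmer) Let V be a finite-dimensional vector space over a field F and let f : V → V be a linear operator whose minimal polynomial splits into linear factors over F. If F has more than two elements, then every characteristic subspace of V for f is hyperinvariant for f. -/

import Mathlib

set_option maxHeartbeats 1000000
set_option synthInstance.maxHeartbeats 400000


/-- A subspace `Y` is hyperinvariant for `f` if `g Y ⊆ Y` for every endomorphism `g`
commuting with `f`. -/
def HyperinvariantSubspace {F V : Type*} [Field F] [AddCommGroup V] [Module F V]
    (f : Module.End F V) (Y : Submodule F V) : Prop :=
  ∀ g : Module.End F V, Commute g f → ∀ x ∈ Y, g x ∈ Y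

/-- A subspace `Y` is characteristic for `f` if it is `f`-invariant and `g Y ⊆ Y` for every
invertible endomorphism `g` commuting with `f`. -/
def CharacteristicSubspace {F V : Type*} [Field F] [AddCommGroup V] [Module F V]
    (f : Module.End F V) (Y : Submodule F V) : Prop :=
  (∀ x ∈ Y, f x ∈ Y) ∧
    ∀ g : Module.End F V, IsUnit g → Commute g f → ∀ x ∈ Y, g x ∈ Y

/-- In a type with more than two elements, given any two elements there is a third one
distinct from both. -/
lemma exists_ne_and_ne_of_two_lt {K : Type*} (h : 2 < Cardinal.mk K) (a b : K) :
    ∃ c : K, c ≠ a ∧ c ≠ b := by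
  classical
  by_contra hc
  push_neg at hc
  have hinj : Function.Injective
      (fun c : K => if c = a then ULift.up (0 : Fin 2) else ULift.up 1) := by
    intro c d hcd
    simp only at hcd
    by_cases hca : c = a <;> by_cases hda : d = a
    · rw [hca, hda]
    · rw [if_pos hca, if_neg hda] at hcd
      exact absurd (show (0 : Fin 2) = 1 from congrArg ULift.down hcd) (by decide)
    · rw [if_neg hca, if_pos hda] at hcd
      exact absurd (show (1 : Fin 2) = 0 from congrArg ULift.down hcd) (by decide)
    · rw [hc c hca, hc d hda]
  have : Cardinal.mk K ≤ 2 := by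
    have := Cardinal.mk_le_of_injective hinj
    simpa [Cardinal.mk_uLift] using this
  exact absurd h (not_lt.mpr this)

/-- Given three pairwise distinct elements, one of them avoids any two given values. -/
lemma exists_ne_and_ne_of_three {K : Type*} {p q r : K} (hpq : p ≠ q) (hpr : p ≠ r)
    (hqr : q ≠ r) (a b : K) : ∃ c : K, c ≠ a ∧ c ≠ b := by
  rcases eq_or_ne p a with rfl | hp
  · rcases eq_or_ne q b with rfl | hq
    · exact ⟨r, hpr.symm, hqr.symm⟩
    · exact ⟨q, hpq.symm, hq⟩
  · rcases eq_or_ne p b with rfl | hpb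
    · rcases eq_or_ne q a with rfl | hqa
      · exact ⟨r, hqr.symm, hpr.symm⟩
      · exact ⟨q, hqa, hpq.symm⟩
    · exact ⟨p, hp, hpb⟩

/-- In a commutative Artinian algebra over a field with more than two elements, every
element is a sum of two units. -/
lemma exists_sum_two_units {F R : Type*} [Field F] [CommRing R] [Algebra F R]
    [IsArtinianRing R] (hcard : 2 < Cardinal.mk F) (a : R) :
    ∃ u v : R, IsUnit u ∧ IsUnit v ∧ a = u + v := by
  obtain ⟨e, he0, he1⟩ := exists_ne_and_ne_of_two_lt hcard 0 1
  haveI : Finite {I : Ideal R | I.IsMaximal} :=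
    (IsArtinianRing.setOfPred_isMaximal_finite R).to_subtype
  have hcop : Pairwise fun i j : {I : Ideal R | I.IsMaximal} => IsCoprime i.1 j.1 := by
    intro i j hij
    exact Ideal.isCoprime_iff_sup_eq.mpr <|
      i.2.coprime_of_ne j.2 (by rwa [Ne, Subtype.coe_inj])
  have hbig : ∀ i : {I : Ideal R | I.IsMaximal},
      ∃ c : R ⧸ i.1, c ≠ 0 ∧ c ≠ Ideal.Quotient.mk i.1 a := by
    intro i
    letI : i.1.IsMaximal := i.2
    letI : Field (R ⧸ i.1) := Ideal.Quotient.field i.1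
    have hinj : Function.Injective (algebraMap F (R ⧸ i.1)) := RingHom.injective _
    refine exists_ne_and_ne_of_three (p := (0 : R ⧸ i.1)) (q := 1)
      (r := algebraMap F (R ⧸ i.1) e) zero_ne_one ?_ ?_ _ _
    · intro h
      exact he0 (hinj (by simpa using h.symm))
    · intro h
      exact he1 (hinj (by simpa using h.symm))
  choose c hc0 hca using hbig
  obtain ⟨r, hr⟩ := Ideal.pi_quotient_surjective hcop c
  have key : ∀ b : R, (∀ i : {I : Ideal R | I.IsMaximal},
      Ideal.Quotient.mk i.1 b ≠ 0) → IsUnit b := by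
    intro b hb
    by_contra h
    obtain ⟨I, hI, hbI⟩ := exists_max_ideal_of_mem_nonunits h
    exact hb ⟨I, hI⟩ (Ideal.Quotient.eq_zero_iff_mem.mpr hbI)
  refine ⟨r, a - r, key r fun i => ?_, key (a - r) fun i => ?_, by ring⟩
  · rw [show (Ideal.Quotient.mk i.1 r : R ⧸ i.1) = c i from hr i]
    exact hc0 i
  · rw [map_sub, show (Ideal.Quotient.mk i.1 r : R ⧸ i.1) = c i from hr i]
    intro h
    exact hca i (by rwa [sub_eq_zero, eq_comm] at h)

/-- Astuti–Wimmer: If the minimal polynomial of `f` splits over `F` and `F`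
has more than two elements, then every characteristic subspace for `f` is hyperinvariant
for `f`. -/
theorem characteristic_eq_hyperinvariant_of_two_lt_card
    {F V : Type*} [Field F] [AddCommGroup V] [Module F V] [FiniteDimensional F V]
    (f : Module.End F V)
    (hsplit : (minpoly F f).Splits)
    (hcard : 2 < Cardinal.mk F)
    (Y : Submodule F V) (hY : CharacteristicSubspace f Y) :
    HyperinvariantSubspace f Y := by
  intro g hg x hx
  set A : Subalgebra F (Module.End F V) := Algebra.adjoin F {g} with hA
  haveI hfd : FiniteDimensional F A := inferInstance
  letI : CommRing A := Algebra.adjoinCommRingOfComm F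
    (by rintro a ha b hb
        simp only [Set.mem_singleton_iff] at ha hb
        subst ha; subst hb; rfl)
  haveI : IsArtinianRing A := isArtinian_of_tower F inferInstance
  obtain ⟨u, v, hu, hv, huv⟩ :=
    exists_sum_two_units (F := F) (R := A) hcard ⟨g, Algebra.self_mem_adjoin_singleton F g⟩
  have hgs : g = (u : Module.End F V) + (v : Module.End F V) := by
    have := congrArg Subtype.val huv
    simpa using this
  have hgu : Commute (u : Module.End F V) f :=
    (Algebra.commute_of_mem_adjoin_singleton_of_commute u.2 hg.symm).symm
  have hgv : Commute (v : Module.End F V) f :=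
    (Algebra.commute_of_mem_adjoin_singleton_of_commute v.2 hg.symm).symm
  have huu : IsUnit (u : Module.End F V) := hu.map A.val
  have hvv : IsUnit (v : Module.End F V) := hv.map A.val
  have : g x = (u : Module.End F V) x + (v : Module.End F V) x := by
    rw [hgs]; rfl
  rw [this]
  exact Y.add_mem (hY.2 _ huu hgu x hx) (hY.2 _ hvv hgv x hx)
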